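/- For n ≥ 2, the normalizer of the group Õ(n) := {λU : λ ∈ ℂ, |λ| = 1, U ∈ O(n)} in U(n) equals Õ(n) itself; equivalently, the normalizer in U(n) of the subgroup generated by SO(n) and the unimodular scalar matrices 𝕋·I_n is the subgroup generated by O(n) and 𝕋·I_n. -/

import Mathlib

open Matrix

/-- `Õ(n) = {λU : λ ∈ 𝕋, U ∈ O(n)}`, the subgroup of `U(n)` generated by `O(n)` and the
unimodular scalar matrices, viewed as a set of complex matrices. -/
def OTildeSet (n : ℕ) : Set (Matrix (Fin n) (Fin n) ℂ) :=
  {M | ∃ (l : ℂ) (O : Matrix (Fin n) (Fin n) ℝ), ‖l‖ = 1 ∧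
    O ∈ Matrix.orthogonalGroup (Fin n) ℝ ∧ M = l • O.map Complex.ofReal}
open Matrix

variable {n : ℕ}

private lemma vmv_transpose (v w : Fin n → ℂ) : (vecMulVec v w)ᵀ = vecMulVec w v := by
  ext i j; simp [vecMulVec_apply, mul_comm]

private lemma vmv_mul (v w : Fin n → ℂ) (B : Matrix (Fin n) (Fin n) ℂ) :
    vecMulVec v w * B = vecMulVec v (w ᵥ* B) := by
  ext i j
  simp [vecMulVec_apply, mul_apply, vecMul, dotProduct, Finset.mul_sum, mul_assoc]

private lemma mul_vmv (v w : Fin n → ℂ) (B : Matrix (Fin n) (Fin n) ℂ) :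
    B * vecMulVec v w = vecMulVec (B *ᵥ v) w := by
  ext i j
  simp [vecMulVec_apply, mul_apply, mulVec, dotProduct, Finset.sum_mul, mul_assoc]

private lemma vmv_transposeR (v w : Fin n → ℝ) : (vecMulVec v w)ᵀ = vecMulVec w v := by
  ext i j; simp [vecMulVec_apply, mul_comm]

private lemma vmv_mulR (v w : Fin n → ℝ) (B : Matrix (Fin n) (Fin n) ℝ) :
    vecMulVec v w * B = vecMulVec v (w ᵥ* B) := by
  ext i j
  simp [vecMulVec_apply, mul_apply, vecMul, dotProduct, Finset.mul_sum, mul_assoc]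

private lemma vecMul_vmv (v w x : Fin n → ℝ) :
    x ᵥ* vecMulVec v w = (x ⬝ᵥ v) • w := by
  funext j
  simp [vecMul, vecMulVec_apply, dotProduct, Finset.sum_mul, mul_assoc]

private lemma star_real (A : Matrix (Fin n) (Fin n) ℝ) : star A = Aᵀ := by
  ext i j; simp [star_apply]

private lemma householder_mem (v : Fin n → ℝ) (hv : v ⬝ᵥ v = 1) :
    (1 - (2:ℝ) • vecMulVec v v) ∈ Matrix.orthogonalGroup (Fin n) ℝ := by
  rw [Matrix.mem_orthogonalGroup_iff]
  have ht : (1 - (2:ℝ) • vecMulVec v v)ᵀ = 1 - (2:ℝ) • vecMulVec v v := by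
    simp [transpose_sub, transpose_smul, vmv_transposeR]
  rw [ht]
  have hWW : vecMulVec v v * vecMulVec v v = vecMulVec v v := by
    rw [vmv_mulR, vecMul_vmv, hv, one_smul]
  have : (1 - (2:ℝ) • vecMulVec v v) * (1 - (2:ℝ) • vecMulVec v v)
      = 1 - (4:ℝ) • vecMulVec v v + (4:ℝ) • (vecMulVec v v * vecMulVec v v) := by
    simp only [Matrix.mul_sub, Matrix.sub_mul, Matrix.one_mul, Matrix.mul_one,
      Matrix.smul_mul, Matrix.mul_smul, smul_smul]
    module
  rw [this, hWW]
  module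

private lemma star_map_ofReal (O : Matrix (Fin n) (Fin n) ℝ) :
    star (O.map Complex.ofReal) = Oᵀ.map Complex.ofReal := by
  ext i j
  simp [Matrix.star_apply, Matrix.map_apply]

private lemma map_mul_ofReal (A B : Matrix (Fin n) (Fin n) ℝ) :
    (A * B).map Complex.ofReal = A.map Complex.ofReal * B.map Complex.ofReal := by
  exact Matrix.map_mul (f := Complex.ofRealHom)

private lemma map_one_ofReal :
    (1 : Matrix (Fin n) (Fin n) ℝ).map Complex.ofReal = 1 := by
  exact Matrix.map_one _ Complex.ofReal_zero Complex.ofReal_one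

private lemma orth_map_unitary {O : Matrix (Fin n) (Fin n) ℝ}
    (hO : O ∈ Matrix.orthogonalGroup (Fin n) ℝ) :
    O.map Complex.ofReal ∈ Matrix.unitaryGroup (Fin n) ℂ := by
  rw [Matrix.mem_unitaryGroup_iff]
  rw [star_map_ofReal, ← map_mul_ofReal]
  rw [Matrix.mem_orthogonalGroup_iff] at hO
  rw [hO, map_one_ofReal]

private lemma otilde_unitary {M : Matrix (Fin n) (Fin n) ℂ} (h : M ∈ OTildeSet n) :
    M ∈ Matrix.unitaryGroup (Fin n) ℂ := by
  obtain ⟨l, O, hl, hO, rfl⟩ := h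
  rw [Matrix.mem_unitaryGroup_iff]
  rw [star_smul, Matrix.smul_mul, Matrix.mul_smul, smul_smul]
  have h1 := orth_map_unitary hO
  rw [Matrix.mem_unitaryGroup_iff] at h1
  rw [h1]
  have : l * star l = 1 := by
    rw [show (star l) = (starRingEnd ℂ) l from rfl, Complex.mul_conj]
    rw [Complex.normSq_eq_norm_sq, hl]
    norm_num
  rw [this, one_smul]

private lemma unit_scalar_mul {l : ℂ} (hl : ‖l‖ = 1)
    {A : Matrix (Fin n) (Fin n) ℂ} (hA : A ∈ Matrix.unitaryGroup (Fin n) ℂ) :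
    l • A ∈ Matrix.unitaryGroup (Fin n) ℂ := by
  rw [Matrix.mem_unitaryGroup_iff] at hA ⊢
  rw [star_smul, Matrix.smul_mul, Matrix.mul_smul, smul_smul, hA]
  have : l * star l = 1 := by
    rw [show (star l) = (starRingEnd ℂ) l from rfl, Complex.mul_conj]
    rw [Complex.normSq_eq_norm_sq, hl]
    norm_num
  rw [this, one_smul]

private lemma char_forward {M : Matrix (Fin n) (Fin n) ℂ} (h : M ∈ OTildeSet n) :
    ∃ μ : ℂ, ‖μ‖ = 1 ∧ M * Mᵀ = μ • 1 := by
  obtain ⟨l, O, hl, hO, rfl⟩ := h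
  refine ⟨l ^ 2, by rw [norm_pow, hl]; norm_num, ?_⟩
  rw [Matrix.transpose_smul, Matrix.smul_mul, Matrix.mul_smul, smul_smul, ← Matrix.transpose_map,
    ← map_mul_ofReal]
  rw [Matrix.mem_orthogonalGroup_iff] at hO
  rw [hO, map_one_ofReal, sq]

private lemma char_backward {M : Matrix (Fin n) (Fin n) ℂ}
    (h1 : M ∈ Matrix.unitaryGroup (Fin n) ℂ) {μ : ℂ} (hμ : ‖μ‖ = 1)
    (h2 : M * Mᵀ = μ • 1) : M ∈ OTildeSet n := by
  obtain ⟨z, hz⟩ := IsAlgClosed.exists_pow_nat_eq μ (n := 2) (by norm_num)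
  have habsz : ‖z‖ = 1 := by
    have h3 : ‖z‖ ^ 2 = 1 := by
      rw [← norm_pow, hz, hμ]
    nlinarith [norm_nonneg z]
  have zne : z ≠ 0 := by
    intro h; rw [h] at habsz; simp at habsz
  have habsinv : ‖z⁻¹‖ = 1 := by rw [norm_inv, habsz]; norm_num
  set N := z⁻¹ • M with hN
  have hNu : N ∈ Matrix.unitaryGroup (Fin n) ℂ := unit_scalar_mul habsinv h1
  have hNt : N * Nᵀ = 1 := by
    rw [hN, Matrix.transpose_smul, Matrix.smul_mul, Matrix.mul_smul, smul_smul, h2, smul_smul]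
    have : z⁻¹ * z⁻¹ * μ = 1 := by
      rw [← hz]; field_simp
    rw [this, one_smul]
  have hstar : Nᵀ = star N := by
    have h4 : star N * N = 1 := (Matrix.mem_unitaryGroup_iff'.mp hNu)
    calc Nᵀ = (star N * N) * Nᵀ := by rw [h4, Matrix.one_mul]
    _ = star N * (N * Nᵀ) := by rw [Matrix.mul_assoc]
    _ = star N := by rw [hNt, Matrix.mul_one]
  have hre : ∀ i j, ((N i j).re : ℂ) = N i j := by
    intro i j
    apply Complex.conj_eq_iff_re.mp
    have := congrFun (congrFun hstar j) i
    rw [Matrix.transpose_apply] at this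
    rw [Matrix.star_apply] at this
    exact this.symm
  set O : Matrix (Fin n) (Fin n) ℝ := Matrix.of (fun i j => (N i j).re) with hOdef
  have hmap : O.map Complex.ofReal = N := by
    ext i j
    rw [Matrix.map_apply]
    exact hre i j
  have hO : O ∈ Matrix.orthogonalGroup (Fin n) ℝ := by
    rw [Matrix.mem_orthogonalGroup_iff]
    have key : (O * Oᵀ).map Complex.ofReal = (1 : Matrix (Fin n) (Fin n) ℝ).map Complex.ofReal := by
      rw [map_mul_ofReal, Matrix.transpose_map, hmap, map_one_ofReal, hNt]
    ext i j
    have := congrFun (congrFun key i) j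
    rw [Matrix.map_apply, Matrix.map_apply] at this
    exact_mod_cast this
  refine ⟨z, O, habsz, hO, ?_⟩
  rw [hmap, hN, smul_smul, mul_inv_cancel₀ zne, one_smul]

private lemma otilde_mul {M N : Matrix (Fin n) (Fin n) ℂ}
    (hM : M ∈ OTildeSet n) (hN : N ∈ OTildeSet n) : M * N ∈ OTildeSet n := by
  obtain ⟨l, O, hl, hO, rfl⟩ := hM
  obtain ⟨l', O', hl', hO', rfl⟩ := hN
  refine ⟨l * l', O * O', by rw [norm_mul, hl, hl', one_mul], mul_mem hO hO', ?_⟩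
  rw [Matrix.smul_mul, Matrix.mul_smul, smul_smul, map_mul_ofReal]

private lemma otilde_star {M : Matrix (Fin n) (Fin n) ℂ}
    (hM : M ∈ OTildeSet n) : star M ∈ OTildeSet n := by
  obtain ⟨l, O, hl, hO, rfl⟩ := hM
  refine ⟨star l, Oᵀ, ?_, ?_, ?_⟩
  · rw [show (star l) = (starRingEnd ℂ) l from rfl, Complex.norm_conj, hl]
  · rw [Matrix.mem_orthogonalGroup_iff, Matrix.transpose_transpose]
    rw [Matrix.mem_orthogonalGroup_iff'] at hO
    exact hO
  · rw [star_smul, star_map_ofReal]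

private lemma vecMul_vmvC (v w x : Fin n → ℂ) :
    x ᵥ* vecMulVec v w = (x ⬝ᵥ v) • w := by
  funext j
  simp [vecMul, vecMulVec_apply, dotProduct, Finset.sum_mul, mul_assoc]

private lemma house_conj (vc : Fin n → ℂ) (B : Matrix (Fin n) (Fin n) ℂ) :
    (1 - (2:ℂ) • vecMulVec vc vc) * B * (1 - (2:ℂ) • vecMulVec vc vc)
      = B - (2:ℂ) • vecMulVec vc (vc ᵥ* B) - (2:ℂ) • vecMulVec (B *ᵥ vc) vc
        + (4:ℂ) • (((vc ᵥ* B) ⬝ᵥ vc) • vecMulVec vc vc) := by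
  have h1 : vecMulVec vc vc * B = vecMulVec vc (vc ᵥ* B) := vmv_mul _ _ _
  have h2 : B * vecMulVec vc vc = vecMulVec (B *ᵥ vc) vc := mul_vmv _ _ _
  have h3 : vecMulVec vc (vc ᵥ* B) * vecMulVec vc vc
      = ((vc ᵥ* B) ⬝ᵥ vc) • vecMulVec vc vc := by
    rw [vmv_mul, vecMul_vmvC]
    ext i j
    simp [vecMulVec_apply, Pi.smul_apply, smul_eq_mul]
    ring
  simp only [Matrix.sub_mul, Matrix.mul_sub, Matrix.one_mul, Matrix.mul_one, Matrix.smul_mul,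
    Matrix.mul_smul, h1, h2, h3, smul_smul]
  module

private lemma house_entry (a b : ℂ) (j k : Fin n) (B : Matrix (Fin n) (Fin n) ℂ)
    (p q : Fin n) (vc : Fin n → ℂ) (hvc : vc = Pi.single j a + Pi.single k b) :
    ((1 - (2:ℂ) • vecMulVec vc vc) * B * (1 - (2:ℂ) • vecMulVec vc vc)) p q
    = B p q
      - 2 * vc p * (a * B j q + b * B k q)
      - 2 * (B p j * a + B p k * b) * vc q
      + 4 * ((a * B j j + b * B k j) * a + (a * B j k + b * B k k) * b)
          * (vc p * vc q) := by
  rw [house_conj]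
  have hvB : vc ᵥ* B = fun q => a * B j q + b * B k q := by
    funext q'; simp [hvc, Matrix.add_vecMul]
  have hBv : B *ᵥ vc = fun p => B p j * a + B p k * b := by
    funext p'; simp [hvc, Matrix.mulVec_add]; ring
  have hdot : ((fun q => a * B j q + b * B k q) : Fin n → ℂ) ⬝ᵥ vc
      = (a * B j j + b * B k j) * a + (a * B j k + b * B k k) * b := by
    rw [hvc]
    simp [dotProduct_add, dotProduct_single]
  simp only [Matrix.sub_apply, Matrix.add_apply, Matrix.smul_apply, vecMulVec_apply, hvB, hBv,
    hdot, smul_eq_mul, Pi.smul_apply]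
  ring

private lemma house_real (j k : Fin n) (hjk : j ≠ k) :
    ∃ H : Matrix (Fin n) (Fin n) ℝ, H ∈ Matrix.orthogonalGroup (Fin n) ℝ ∧
      H.map Complex.ofReal = 1 - (2:ℂ) • vecMulVec
        (Pi.single j (3/5:ℂ) + Pi.single k (4/5:ℂ))
        (Pi.single j (3/5:ℂ) + Pi.single k (4/5:ℂ)) := by
  set v : Fin n → ℝ := Pi.single j (3/5:ℝ) + Pi.single k (4/5:ℝ) with hv
  have hvv : v ⬝ᵥ v = 1 := by
    rw [hv]
    simp [add_dotProduct, dotProduct_add, dotProduct_single,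
      single_dotProduct, Pi.single_apply, hjk, hjk.symm]
    norm_num
  refine ⟨1 - (2:ℝ) • vecMulVec v v, householder_mem v hvv, ?_⟩
  ext i i'
  simp only [Matrix.map_apply, Matrix.sub_apply, Matrix.smul_apply, Matrix.one_apply,
    vecMulVec_apply, Pi.add_apply, Pi.single_apply, smul_eq_mul, hv]
  split_ifs <;> push_cast <;> ring

private lemma sign_real (j : Fin n) :
    ∃ D : Matrix (Fin n) (Fin n) ℝ, D ∈ Matrix.orthogonalGroup (Fin n) ℝ ∧
      D.map Complex.ofReal = Matrix.diagonal (fun i => if i = j then (-1:ℂ) else 1) := by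
  refine ⟨Matrix.diagonal (fun i => if i = j then (-1:ℝ) else 1), ?_, ?_⟩
  · rw [Matrix.mem_orthogonalGroup_iff, Matrix.diagonal_transpose,
      Matrix.diagonal_mul_diagonal]
    ext i i'
    simp only [Matrix.diagonal_apply, Matrix.one_apply]
    split_ifs <;> norm_num
  · rw [Matrix.diagonal_map (by norm_num)]
    ext i i'
    simp only [Matrix.diagonal_apply]
    split_ifs <;> norm_num

private lemma transpose_unitary {A : Matrix (Fin n) (Fin n) ℂ}
    (hA : A ∈ Matrix.unitaryGroup (Fin n) ℂ) : Aᵀ ∈ Matrix.unitaryGroup (Fin n) ℂ := by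
  rw [Matrix.mem_unitaryGroup_iff]
  have h1 : Aᵀᴴ = Aᴴᵀ := by
    ext i i'
    simp [Matrix.conjTranspose_apply]
  rw [Matrix.star_eq_conjTranspose, h1, ← Matrix.transpose_mul]
  have h2 := Matrix.mem_unitaryGroup_iff'.mp hA
  rw [Matrix.star_eq_conjTranspose] at h2
  rw [h2, Matrix.transpose_one]

/-- For `n ≥ 2`, the normalizer of `Õ(n)` in `U(n)` is `Õ(n)` itself: a unitary
`U` satisfies `U Õ(n) U⁻¹ = Õ(n)` if and only if `U ∈ Õ(n)`. -/
theorem normalizer_OTilde_eq_OTilde (n : ℕ) (hn : 2 ≤ n)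
    (U : Matrix (Fin n) (Fin n) ℂ) (hU : U ∈ Matrix.unitaryGroup (Fin n) ℂ) :
    (fun M => U * M * star U) '' OTildeSet n = OTildeSet n ↔ U ∈ OTildeSet n := by
  constructor
  · intro himg
    have hU' : star U * U = 1 := Matrix.mem_unitaryGroup_iff'.mp hU
    set V := star U with hV
    set B := V * Vᵀ with hB
    have hVu : V ∈ Matrix.unitaryGroup (Fin n) ℂ := Unitary.star_mem hU
    have hBu : B ∈ Matrix.unitaryGroup (Fin n) ℂ := mul_mem hVu (transpose_unitary hVu)
    have hBsym : Bᵀ = B := by rw [hB, Matrix.transpose_mul, Matrix.transpose_transpose]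
    have key : ∀ O ∈ Matrix.orthogonalGroup (Fin n) ℝ, ∃ μ : ℂ,
        (O.map Complex.ofReal) * B * (O.map Complex.ofReal)ᵀ = μ • B := by
      intro O hO
      have hOc : O.map Complex.ofReal ∈ OTildeSet n :=
        ⟨1, O, by simp, hO, by rw [one_smul]⟩
      have hmem : U * (O.map Complex.ofReal) * star U ∈ OTildeSet n := by
        rw [← himg]; exact Set.mem_image_of_mem _ hOc
      obtain ⟨μ, hμabs, heq⟩ := char_forward hmem
      refine ⟨μ, ?_⟩
      set Oc := O.map Complex.ofReal with hOc2
      have e2 : Uᵀ * Vᵀ = 1 := by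
        rw [← Matrix.transpose_mul, hU', Matrix.transpose_one]
      have heq' : U * (Oc * (V * (Vᵀ * (Ocᵀ * Uᵀ)))) = μ • 1 := by
        simpa only [Matrix.transpose_mul, Matrix.mul_assoc] using heq
      calc Oc * B * Ocᵀ = (V * U) * (Oc * B * Ocᵀ) * (Uᵀ * Vᵀ) := by
            rw [hU', e2, Matrix.one_mul, Matrix.mul_one]
        _ = V * (U * (Oc * (V * (Vᵀ * (Ocᵀ * Uᵀ))))) * Vᵀ := by
            simp only [hB, Matrix.mul_assoc]
        _ = V * (μ • 1) * Vᵀ := by rw [heq']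
        _ = μ • B := by
            rw [Matrix.mul_smul, Matrix.mul_one, Matrix.smul_mul, hB]
    have hBstar : B * star B = 1 := Matrix.mem_unitaryGroup_iff.mp hBu
    have hrow : ∀ j, ∃ q, B j q ≠ 0 := by
      intro j
      by_contra h
      push_neg at h
      have h1 := congrFun (congrFun hBstar j) j
      rw [Matrix.mul_apply] at h1
      simp [h, Matrix.one_apply] at h1
    have hD : ∀ j : Fin n, ∃ μ : ℂ, ∀ p q,
        (if p = j then (-1:ℂ) else 1) * B p q * (if q = j then (-1:ℂ) else 1) = μ * B p q := by
      intro j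
      obtain ⟨D, hDo, hDmap⟩ := sign_real (n := n) j
      obtain ⟨μ, hμ⟩ := key D hDo
      refine ⟨μ, fun p q => ?_⟩
      have h2 := congrFun (congrFun hμ p) q
      rw [hDmap, Matrix.diagonal_transpose, Matrix.mul_diagonal, Matrix.diagonal_mul,
        Matrix.smul_apply, smul_eq_mul] at h2
      exact h2
    have hH : ∀ j k : Fin n, j ≠ k → ∃ μ : ℂ, ∀ p q : Fin n,
        B p q
          - 2 * ((Pi.single j (3/5:ℂ) : Fin n → ℂ) p + (Pi.single k (4/5:ℂ) : Fin n → ℂ) p)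
              * ((3/5) * B j q + (4/5) * B k q)
          - 2 * (B p j * (3/5) + B p k * (4/5))
              * ((Pi.single j (3/5:ℂ) : Fin n → ℂ) q + (Pi.single k (4/5:ℂ) : Fin n → ℂ) q)
          + 4 * (((3/5) * B j j + (4/5) * B k j) * (3/5)
              + ((3/5) * B j k + (4/5) * B k k) * (4/5))
              * (((Pi.single j (3/5:ℂ) : Fin n → ℂ) p + (Pi.single k (4/5:ℂ) : Fin n → ℂ) p)
                * ((Pi.single j (3/5:ℂ) : Fin n → ℂ) q + (Pi.single k (4/5:ℂ) : Fin n → ℂ) q))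
          = μ * B p q := by
      intro j k hjk
      obtain ⟨H, hHo, hHmap⟩ := house_real j k hjk
      obtain ⟨μ, hμ⟩ := key H hHo
      refine ⟨μ, fun p q => ?_⟩
      have h2 := congrFun (congrFun hμ p) q
      rw [hHmap] at h2
      have htr : (1 - (2:ℂ) • vecMulVec
          (Pi.single j (3/5:ℂ) + Pi.single k (4/5:ℂ))
          (Pi.single j (3/5:ℂ) + Pi.single k (4/5:ℂ)))ᵀ
          = (1 : Matrix (Fin n) (Fin n) ℂ) - (2:ℂ) • vecMulVec
          (Pi.single j (3/5:ℂ) + Pi.single k (4/5:ℂ))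
          (Pi.single j (3/5:ℂ) + Pi.single k (4/5:ℂ)) := by
        rw [Matrix.transpose_sub, Matrix.transpose_smul, vmv_transpose, Matrix.transpose_one]
      rw [htr, house_entry (3/5) (4/5) j k B p q _ rfl, Matrix.smul_apply, smul_eq_mul] at h2
      simpa only [Pi.add_apply] using h2
    by_cases hcase : ∃ j₀, B j₀ j₀ ≠ 0
    · obtain ⟨j₀, hj₀⟩ := hcase
      have halldiag : ∀ l, B l l ≠ 0 := by
        intro l
        by_cases hl : l = j₀
        · rwa [hl]
        intro h0
        obtain ⟨μ, hμ⟩ := hD l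
        obtain ⟨q, hq⟩ := hrow l
        have hql : ¬(q = l) := by rintro rfl; exact hq h0
        have h1 := hμ l q
        rw [if_pos rfl, if_neg hql] at h1
        have hμval : μ = -1 := by
          have h1' : μ * B l q = (-1) * B l q := by linear_combination -h1
          exact mul_right_cancel₀ hq h1'
        have h2 := hμ j₀ j₀
        rw [if_neg (fun h => hl h.symm), hμval] at h2
        have : B j₀ j₀ = 0 := by linear_combination h2 / 2
        exact hj₀ this
      have hoffdiag : ∀ p q, p ≠ q → B p q = 0 := by
        intro p q hpq
        obtain ⟨μ, hμ⟩ := hD p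
        have h1 := hμ p p
        rw [if_pos rfl] at h1
        have hμ1 : μ = 1 := by
          have h1' : μ * B p p = 1 * B p p := by linear_combination -h1
          exact mul_right_cancel₀ (halldiag p) h1'
        have h2 := hμ p q
        rw [if_pos rfl, if_neg (fun h => hpq h.symm), hμ1] at h2
        linear_combination -h2 / 2
      have hdiageq : ∀ j k, j ≠ k → B j j = B k k := by
        intro j k hjk
        obtain ⟨μ, hμ⟩ := hH j k hjk
        have h1 := hμ j k
        have e1 : B j k = 0 := hoffdiag _ _ hjk
        have e2 : B k j = 0 := hoffdiag _ _ (Ne.symm hjk)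
        rw [e1, e2, Pi.single_eq_same, Pi.single_eq_same,
          Pi.single_eq_of_ne (Ne.symm hjk), Pi.single_eq_of_ne hjk] at h1
        linear_combination (-625/168 : ℂ) * h1
      set b := B j₀ j₀ with hbdef
      have hBscal : B = b • (1 : Matrix (Fin n) (Fin n) ℂ) := by
        ext p q
        by_cases hpq : p = q
        · subst hpq
          rw [Matrix.smul_apply, Matrix.one_apply_eq, smul_eq_mul, mul_one]
          by_cases hp : p = j₀
          · rw [hp]
          · exact hdiageq p j₀ hp
        · rw [hoffdiag p q hpq, Matrix.smul_apply, Matrix.one_apply_ne hpq, smul_zero]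
      have i0 : Fin n := ⟨0, by omega⟩
      have habs : ‖b‖ = 1 := by
        have h4 := Matrix.mem_unitaryGroup_iff'.mp hBu
        rw [hBscal] at h4
        rw [star_smul, star_one] at h4
        rw [Matrix.smul_mul, Matrix.mul_smul, Matrix.one_mul, smul_smul] at h4
        have h5 := congrFun (congrFun h4 i0) i0
        rw [Matrix.smul_apply, Matrix.one_apply_eq, smul_eq_mul, mul_one] at h5
        have h6 : Complex.normSq b = 1 := by
          have : ((Complex.normSq b : ℝ) : ℂ) = 1 := by
            rw [← Complex.mul_conj]
            rw [show (star b) = (starRingEnd ℂ) b from rfl] at h5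
            rw [mul_comm] at h5
            exact h5
          exact_mod_cast this
        rw [Complex.norm_def, h6, Real.sqrt_one]
      have hVot : V ∈ OTildeSet n := by
        apply char_backward hVu habs
        rw [← hB, hBscal]
      have hfin := otilde_star hVot
      rw [hV, star_star] at hfin
      exact hfin
    · push_neg at hcase
      have i0 : Fin n := ⟨0, by omega⟩
      obtain ⟨q, hq⟩ := hrow i0
      have hqi : ¬(i0 = q) := by rintro rfl; exact hq (hcase _)
      obtain ⟨μ, hμ⟩ := hH i0 q hqi
      have h1 := hμ i0 i0
      have hsym : B q i0 = B i0 q := by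
        have := congrFun (congrFun hBsym i0) q
        rwa [Matrix.transpose_apply] at this
      rw [hcase i0, hcase q, hsym, Pi.single_eq_same,
        Pi.single_eq_of_ne hqi] at h1
      exact absurd (by linear_combination (-625/336 : ℂ) * h1) hq
  · intro hUO
    ext N
    constructor
    · rintro ⟨M, hM, rfl⟩
      exact otilde_mul (otilde_mul hUO hM) (otilde_star hUO)
    · intro hN
      refine ⟨star U * N * U, otilde_mul (otilde_mul (otilde_star hUO) hN) hUO, ?_⟩
      have h1 : U * star U = 1 := Matrix.mem_unitaryGroup_iff.mp hU
      show U * (star U * N * U) * star U = N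
      calc U * (star U * N * U) * star U = (U * star U) * N * (U * star U) := by
            simp only [Matrix.mul_assoc]
        _ = N := by rw [h1, Matrix.one_mul, Matrix.mul_one]
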